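/- Let n be a positive integer, k ≥ 2 an integer, and p a nonnegative integer with p ≤ ⌊n/(k+1)⌋. For the path graph P_n: if p = ⌊n/(k+1)⌋ then CM_k(P_n, p) = 0, and if p < ⌊n/(k+1)⌋ then CM_k(P_n, p) = ⌊(n − p(k+1) − 1)/k⌋. -/

import Mathlib

open SimpleGraph

/-- A graph is in a *failure state* for `k` if every connected component has
diameter less than `k`, i.e. every pair of mutually reachable vertices is at
distance less than `k`. -/
def FailureState {V : Type*} (G : SimpleGraph V) (k : ℕ) : Prop :=
  ∀ u v : V, G.Reachable u v → G.dist u v < k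

/-- `G` contains `m` pairwise vertex-disjoint paths of length `k`. -/
def HasDisjointPaths {V : Type*} (G : SimpleGraph V) (k m : ℕ) : Prop :=
  ∃ (u v : Fin m → V) (P : ∀ i, G.Walk (u i) (v i)),
    (∀ i, (P i).IsPath ∧ (P i).length = k) ∧
    ∀ i j, i ≠ j → ∀ x, x ∈ (P i).support → x ∉ (P j).support

/-- The `k`-diameter component vertex connectivity: the minimum size of a set of
vertices whose deletion leaves every component with diameter less than `k`. -/
noncomputable def CV {V : Type*} (G : SimpleGraph V) (k : ℕ) : ℕ :=
  sInf {n | ∃ V' : Finset V, V'.card = n ∧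
    FailureState (G.induce ((V' : Set V))ᶜ) k}

/-- The `k`-diameter component edge connectivity: the minimum size of a set of
edges whose deletion leaves every component with diameter less than `k`. -/
noncomputable def CE {V : Type*} (G : SimpleGraph V) (k : ℕ) : ℕ :=
  sInf {n | ∃ E' : Finset (Sym2 V), (E' : Set (Sym2 V)) ⊆ G.edgeSet ∧ E'.card = n ∧
    FailureState (G.deleteEdges (E' : Set (Sym2 V))) k}

/-- The `k`-diameter component connectivity function: the minimum over all
`p`-element vertex sets `V'` of `CE k (G - V')`. -/
noncomputable def CM {V : Type*} (G : SimpleGraph V) (k p : ℕ) : ℕ :=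
  sInf {q | ∃ V' : Finset V, V'.card = p ∧
    CE (G.induce ((V' : Set V))ᶜ) k = q}

/-! ### Auxiliary definitions and lemmas -/

/-- The larger endpoint index of an edge of a graph on a subtype of `Fin n`. -/
def symMax {n : ℕ} {s : Set (Fin n)} : Sym2 ↥s → ℕ :=
  Sym2.lift ⟨fun a b => max (a : Fin n).val (b : Fin n).val, fun a b => max_comm _ _⟩

@[simp] lemma symMax_mk {n : ℕ} {s : Set (Fin n)} (a b : ↥s) :
    symMax s(a, b) = max (a : Fin n).val (b : Fin n).val := rfl

section helper
variable {V : Type*} {H : SimpleGraph V} {f : V → ℕ}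

/-- Intermediate value property for walks in a subgraph of a path graph. -/
lemma aux_iv (hstep : ∀ a b, H.Adj a b → f a + 1 = f b ∨ f b + 1 = f a)
    {u v : V} (W : H.Walk u v) : ∀ t : ℕ, f u ≤ t → t ≤ f v → ∃ x ∈ W.support, f x = t := by
  induction W with
  | nil => intro t h1 h2; exact ⟨_, Walk.start_mem_support _, by omega⟩
  | @cons a b c h W ih =>
    intro t h1 h2
    rcases eq_or_lt_of_le h1 with heq | hlt
    · exact ⟨a, Walk.start_mem_support _, heq⟩
    · have hb : f b ≤ t := by rcases hstep _ _ h with h' | h' <;> omega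
      obtain ⟨x, hx, hxf⟩ := ih t hb h2
      exact ⟨x, by rw [Walk.support_cons]; exact List.mem_cons_of_mem _ hx, hxf⟩

/-- Paths in a subgraph of a path graph are monotone. -/
lemma aux_path (hinj : Function.Injective f)
    (hstep : ∀ a b, H.Adj a b → f a + 1 = f b ∨ f b + 1 = f a) :
    ∀ {u v : V} (W : H.Walk u v), W.IsPath → f u ≤ f v →
      W.length = f v - f u ∧
      ∀ t, f u ≤ t → t < f v → ∃ a b, H.Adj a b ∧ f a = t ∧ f b = t + 1 := by
  intro u v W
  induction W with
  | nil => intro _ _; exact ⟨by simp, fun t h1 h2 => by omega⟩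
  | @cons a b c h W ih =>
    intro hp hle
    rw [Walk.cons_isPath_iff] at hp
    rcases hstep _ _ h with hab | hab
    · have hbc : f b ≤ f c := by
        by_contra hcon
        push_neg at hcon
        have hca : c = a := hinj (by omega)
        exact hp.2 (hca ▸ W.end_mem_support)
      obtain ⟨hlen, hedge⟩ := ih hp.1 hbc
      refine ⟨by rw [Walk.length_cons]; omega, ?_⟩
      intro t h1 h2
      rcases eq_or_lt_of_le h1 with heq | hlt
      · exact ⟨a, b, h, heq, by omega⟩
      · exact hedge t (by omega) h2
    · exfalso
      obtain ⟨x, hx, hxf⟩ := aux_iv hstep W (f a) (by omega) hle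
      exact hp.2 ((hinj hxf) ▸ hx)

lemma aux_reach (hinj : Function.Injective f)
    (hstep : ∀ a b, H.Adj a b → f a + 1 = f b ∨ f b + 1 = f a)
    {u v : V} (hr : H.Reachable u v) (hle : f u ≤ f v) :
    H.dist u v = f v - f u ∧ (∀ t, f u ≤ t → t ≤ f v → ∃ x : V, f x = t) ∧
      (∀ t, f u ≤ t → t < f v → ∃ a b, H.Adj a b ∧ f a = t ∧ f b = t + 1) := by
  obtain ⟨W, hW, hlen⟩ := hr.exists_path_of_dist
  obtain ⟨h1, h2⟩ := aux_path hinj hstep W hW hle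
  refine ⟨by omega, ?_, h2⟩
  intro t ht1 ht2
  obtain ⟨x, _, hx⟩ := aux_iv hstep W t ht1 ht2
  exact ⟨x, hx⟩

lemma aux_build (hinj : Function.Injective f) {s : ℕ} :
    ∀ (d : ℕ) (x0 : V), f x0 = s →
      (∀ t, s ≤ t → t < s + d → ∃ a b, H.Adj a b ∧ f a = t ∧ f b = t + 1) →
      ∃ y, f y = s + d ∧ H.Reachable x0 y := by
  intro d
  induction d with
  | zero => intro x0 h0 _; exact ⟨x0, by omega, Reachable.refl _⟩
  | succ d ih =>
    intro x0 h0 hE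
    obtain ⟨y, hy, hr⟩ := ih x0 h0 (fun t h1 h2 => hE t h1 (by omega))
    obtain ⟨a, b, hab, ha, hb⟩ := hE (s + d) (by omega) (by omega)
    have hay : a = y := hinj (by omega)
    exact ⟨b, by omega, hr.trans (hay ▸ hab).reachable⟩

end helper

/-- The key combinatorial lemma: if few enough "cuts" remain beyond position `a`,
there is an uncut window of `k+1` consecutive positions. -/
lemma aux_window (n k : ℕ) (SV CEp : Finset ℕ) :
    ∀ N a, n - a ≤ N →
      a + (k+1) * ((SV.filter (fun t => a ≤ t)).card)
        + k * ((CEp.filter (fun c => a < c)).card) + (k+1) ≤ n →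
      ∃ s, a ≤ s ∧ s + k < n ∧ (∀ t, s ≤ t → t ≤ s + k → t ∉ SV) ∧
        (∀ c, s < c → c ≤ s + k → c ∉ CEp) := by
  intro N
  induction N with
  | zero =>
    intro a hN hyp
    exfalso
    have h1 := Nat.zero_le ((k+1) * ((SV.filter (fun t => a ≤ t)).card))
    have h2 := Nat.zero_le (k * ((CEp.filter (fun c => a < c)).card))
    omega
  | succ N ih =>
    intro a hN hyp
    have han : a + (k + 1) ≤ n := by
      have h1 := Nat.zero_le ((k+1) * ((SV.filter (fun t => a ≤ t)).card))
      have h2 := Nat.zero_le (k * ((CEp.filter (fun c => a < c)).card))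
      omega
    by_cases hv : ∃ t ∈ SV, a ≤ t ∧ t ≤ a + k
    · obtain ⟨t, htS, hat, hta⟩ := hv
      have htm : t ∈ SV.filter (fun x => a ≤ x) := Finset.mem_filter.mpr ⟨htS, hat⟩
      have hc1 : (SV.filter (fun x => t + 1 ≤ x)).card + 1 ≤ (SV.filter (fun x => a ≤ x)).card := by
        have hsub : (SV.filter (fun x => t + 1 ≤ x)) ⊆ (SV.filter (fun x => a ≤ x)).erase t := by
          intro x hx
          simp only [Finset.mem_filter, Finset.mem_erase] at *
          exact ⟨by omega, hx.1, by omega⟩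
        have h4 := Finset.card_le_card hsub
        rw [Finset.card_erase_of_mem htm] at h4
        have hpos : 1 ≤ (SV.filter (fun x => a ≤ x)).card := Finset.card_pos.mpr ⟨t, htm⟩
        omega
      have hc2 : (CEp.filter (fun c => t + 1 < c)).card ≤ (CEp.filter (fun c => a < c)).card := by
        apply Finset.card_le_card
        intro x hx
        simp only [Finset.mem_filter] at *
        exact ⟨hx.1, by omega⟩
      have hyp' : (t+1) + (k+1) * ((SV.filter (fun x => t + 1 ≤ x)).card)
          + k * ((CEp.filter (fun c => t + 1 < c)).card) + (k+1) ≤ n := by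
        have e1 : (k+1) * ((SV.filter (fun x => t + 1 ≤ x)).card) + (k+1)
            ≤ (k+1) * ((SV.filter (fun x => a ≤ x)).card) := by
          calc (k+1) * ((SV.filter (fun x => t + 1 ≤ x)).card) + (k+1)
              = (k+1) * ((SV.filter (fun x => t + 1 ≤ x)).card + 1) := by ring
            _ ≤ (k+1) * ((SV.filter (fun x => a ≤ x)).card) := Nat.mul_le_mul_left _ hc1
        have e2 : k * ((CEp.filter (fun c => t + 1 < c)).card)
            ≤ k * ((CEp.filter (fun c => a < c)).card) := Nat.mul_le_mul_left _ hc2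
        omega
      obtain ⟨s, hs1, hs2, hs3, hs4⟩ := ih (t+1) (by omega) hyp'
      exact ⟨s, by omega, hs2, hs3, hs4⟩
    · by_cases he : ∃ c ∈ CEp, a < c ∧ c ≤ a + k
      · obtain ⟨c, hcE, hac, hca⟩ := he
        have hcm : c ∈ CEp.filter (fun x => a < x) := Finset.mem_filter.mpr ⟨hcE, hac⟩
        have hc1 : (SV.filter (fun x => c ≤ x)).card ≤ (SV.filter (fun x => a ≤ x)).card := by
          apply Finset.card_le_card
          intro x hx
          simp only [Finset.mem_filter] at *
          exact ⟨hx.1, by omega⟩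
        have hc2 : (CEp.filter (fun x => c < x)).card + 1 ≤ (CEp.filter (fun x => a < x)).card := by
          have hsub : (CEp.filter (fun x => c < x)) ⊆ (CEp.filter (fun x => a < x)).erase c := by
            intro x hx
            simp only [Finset.mem_filter, Finset.mem_erase] at *
            exact ⟨by omega, hx.1, by omega⟩
          have h4 := Finset.card_le_card hsub
          rw [Finset.card_erase_of_mem hcm] at h4
          have hpos : 1 ≤ (CEp.filter (fun x => a < x)).card := Finset.card_pos.mpr ⟨c, hcm⟩
          omega
        have hyp' : c + (k+1) * ((SV.filter (fun x => c ≤ x)).card)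
            + k * ((CEp.filter (fun x => c < x)).card) + (k+1) ≤ n := by
          have e1 : (k+1) * ((SV.filter (fun x => c ≤ x)).card)
              ≤ (k+1) * ((SV.filter (fun x => a ≤ x)).card) := Nat.mul_le_mul_left _ hc1
          have e2 : k * ((CEp.filter (fun x => c < x)).card) + k
              ≤ k * ((CEp.filter (fun x => a < x)).card) := by
            calc k * ((CEp.filter (fun x => c < x)).card) + k
                = k * ((CEp.filter (fun x => c < x)).card + 1) := by ring
              _ ≤ k * ((CEp.filter (fun x => a < x)).card) := Nat.mul_le_mul_left _ hc2
          omega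
        obtain ⟨s, hs1, hs2, hs3, hs4⟩ := ih c (by omega) hyp'
        exact ⟨s, by omega, hs2, hs3, hs4⟩
      · push_neg at hv he
        exact ⟨a, le_rfl, by omega, fun t h1 h2 ht => by have := hv t ht h1; omega,
          fun c h1 h2 hc => by have := he c hc h1; omega⟩

/-- The `k`-diameter component connectivity function of the
path graph on `n` vertices. -/
theorem CM_pathGraph (n k p : ℕ) (hn : 0 < n) (hk : 2 ≤ k)
    (hp : p ≤ n / (k + 1)) :
    (p = n / (k + 1) → CM (SimpleGraph.pathGraph n) k p = 0) ∧
    (p < n / (k + 1) →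
      CM (SimpleGraph.pathGraph n) k p = (n - p * (k + 1) - 1) / k) := by
  classical
  have hk0 : 0 < k := by omega
  have hpk : p * (k + 1) ≤ n :=
    le_trans (Nat.mul_le_mul_right _ hp) (Nat.div_mul_le_self n (k+1))
  obtain ⟨m, hm⟩ : ∃ m, n = p * (k+1) + m := ⟨n - p*(k+1), (Nat.add_sub_cancel' hpk).symm⟩
  obtain ⟨q, hq0⟩ : ∃ q, (m - 1)/k = q := ⟨_, rfl⟩
  have hnm : n - p * (k+1) = m := by rw [hm, Nat.add_sub_cancel_left]
  have hq1 : q * k + 1 ≤ m ∨ m = 0 := by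
    rcases Nat.eq_zero_or_pos m with h | h
    · right; exact h
    · left
      obtain ⟨m', hm'⟩ : ∃ m', m = m' + 1 := ⟨m - 1, by omega⟩
      have hqm : q = m' / k := by rw [← hq0, hm']; simp
      have h2 : (m'/k) * k ≤ m' := Nat.div_mul_le_self _ _
      rw [hqm]; omega
  -- step condition for subgraphs of the path graph
  have hstepT : ∀ (s : Set (Fin n)) (E'' : Set (Sym2 ↥s)) (a b : ↥s),
      (((pathGraph n).induce s).deleteEdges E'').Adj a b →
      (fun x : ↥s => (x : Fin n).val) a + 1 = (fun x : ↥s => (x : Fin n).val) b ∨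
      (fun x : ↥s => (x : Fin n).val) b + 1 = (fun x : ↥s => (x : Fin n).val) a := by
    intro s E'' a b hab
    rw [SimpleGraph.deleteEdges_adj] at hab
    exact pathGraph_adj.mp hab.1
  have hinjT : ∀ s : Set (Fin n), Function.Injective (fun x : ↥s => (x : Fin n).val) :=
    fun s a b h => Subtype.ext (Fin.val_injective h)
  -- the vertex deletion set S
  have hjlt : ∀ j, j < p → j * (k+1) + k < n := by
    intro j hj
    have h1 : (j+1)*(k+1) ≤ p*(k+1) := Nat.mul_le_mul_right _ hj
    have h2 : (j+1)*(k+1) = j*(k+1) + (k+1) := by ring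
    omega
  set S : Finset (Fin n) := (Finset.range p).attach.image
    (fun j => (⟨j.1*(k+1)+k, hjlt j.1 (Finset.mem_range.mp j.2)⟩ : Fin n)) with hSdef
  have hScard : S.card = p := by
    rw [hSdef, Finset.card_image_of_injOn, Finset.card_attach, Finset.card_range]
    intro a _ b _ hab
    have h1 : a.1*(k+1)+k = b.1*(k+1)+k := congrArg Fin.val hab
    have h2 : a.1*(k+1) = b.1*(k+1) := by omega
    exact Subtype.ext (Nat.eq_of_mul_eq_mul_right (by omega) h2)
  have hSmem' : ∀ x : Fin n, x ∈ S ↔ ∃ j, j < p ∧ x.val = j*(k+1)+k := by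
    intro x
    constructor
    · intro hx
      obtain ⟨j, -, hj⟩ := Finset.mem_image.mp hx
      exact ⟨j.1, Finset.mem_range.mp j.2, by rw [← hj]⟩
    · rintro ⟨j, hj, hx⟩
      apply Finset.mem_image.mpr
      exact ⟨⟨j, Finset.mem_range.mpr hj⟩, Finset.mem_attach _ _, Fin.ext hx.symm⟩
  have hnotS : ∀ x : Fin n, p*(k+1) ≤ x.val → x ∉ S := by
    intro x hx hmem
    obtain ⟨j, hj, hval⟩ := (hSmem' x).mp hmem
    have h1 : (j+1)*(k+1) ≤ p*(k+1) := Nat.mul_le_mul_right _ hj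
    have h2 : (j+1)*(k+1) = j*(k+1) + (k+1) := by ring
    omega
  -- the edge deletion set E'
  have hBlt : ∀ j : ℕ, 1 ≤ j → j ≤ q → p*(k+1) + j*k < n := by
    intro j h1 h2
    rcases hq1 with hc | hc
    · have h3 : j*k ≤ q*k := Nat.mul_le_mul_right _ h2
      omega
    · have hq00 : q = 0 := by rw [← hq0, hc]; simp
      omega
  have hB1 : ∀ j : ℕ, 1 ≤ j → p*(k+1) + 1 ≤ p*(k+1) + j*k := by
    intro j h1
    have h2 : 1*k ≤ j*k := Nat.mul_le_mul_right _ h1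
    have h3 : 1*k = k := one_mul k
    omega
  set E' : Finset (Sym2 ↥((↑S : Set (Fin n))ᶜ)) := (Finset.Icc 1 q).attach.image
    (fun j =>
      s((⟨⟨p*(k+1) + j.1*k - 1, lt_of_le_of_lt (Nat.sub_le _ _)
            (hBlt j.1 (Finset.mem_Icc.mp j.2).1 (Finset.mem_Icc.mp j.2).2)⟩, by
          simp only [Set.mem_compl_iff, Finset.mem_coe]
          apply hnotS
          have := hB1 j.1 (Finset.mem_Icc.mp j.2).1
          simp only []
          omega⟩ : ↥((↑S : Set (Fin n))ᶜ)),
        (⟨⟨p*(k+1) + j.1*k, hBlt j.1 (Finset.mem_Icc.mp j.2).1 (Finset.mem_Icc.mp j.2).2⟩, by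
          simp only [Set.mem_compl_iff, Finset.mem_coe]
          apply hnotS
          have := hB1 j.1 (Finset.mem_Icc.mp j.2).1
          simp only []
          omega⟩ : ↥((↑S : Set (Fin n))ᶜ)))) with hEdef
  have hE'card : E'.card = q := by
    rw [hEdef, Finset.card_image_of_injOn, Finset.card_attach, Nat.card_Icc]
    · omega
    · intro j1 _ j2 _ he
      have hmax := congrArg symMax he
      simp only [symMax_mk] at hmax
      have e1 : max (p*(k+1) + j1.1*k - 1) (p*(k+1) + j1.1*k) = p*(k+1) + j1.1*k :=
        max_eq_right (Nat.sub_le _ _)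
      have e2 : max (p*(k+1) + j2.1*k - 1) (p*(k+1) + j2.1*k) = p*(k+1) + j2.1*k :=
        max_eq_right (Nat.sub_le _ _)
      have hd : p*(k+1) + j1.1*k = p*(k+1) + j2.1*k := by
        rw [e1, e2] at hmax; exact hmax
      have h5 : j1.1 * k = j2.1 * k := by omega
      exact Subtype.ext (Nat.eq_of_mul_eq_mul_right hk0 h5)
  have hEsub : (↑E' : Set (Sym2 ↥((↑S : Set (Fin n))ᶜ))) ⊆
      ((pathGraph n).induce ((↑S : Set (Fin n))ᶜ)).edgeSet := by
    intro e he
    obtain ⟨j, -, rfl⟩ := Finset.mem_image.mp (Finset.mem_coe.mp he)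
    rw [SimpleGraph.mem_edgeSet]
    have h1 := hB1 j.1 (Finset.mem_Icc.mp j.2).1
    show (pathGraph n).Adj _ _
    rw [pathGraph_adj]
    left
    show p*(k+1) + j.1*k - 1 + 1 = p*(k+1) + j.1*k
    omega
  -- membership criterion for E'
  have hmemE : ∀ (jj : ℕ), 1 ≤ jj → jj ≤ q → ∀ (a b : ↥((↑S : Set (Fin n))ᶜ)),
      (a : Fin n).val = p*(k+1) + jj*k - 1 → (b : Fin n).val = p*(k+1) + jj*k →
      s(a, b) ∈ E' := by
    intro jj hj1 hj2 a b ha hb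
    rw [hEdef]
    apply Finset.mem_image.mpr
    refine ⟨⟨jj, Finset.mem_Icc.mpr ⟨hj1, hj2⟩⟩, Finset.mem_attach _ _, ?_⟩
    exact Sym2.eq_iff.mpr (Or.inl ⟨Subtype.ext (Fin.ext ha.symm),
      Subtype.ext (Fin.ext hb.symm)⟩)
  -- the failure state for the construction
  have hfail : FailureState
      (((pathGraph n).induce ((↑S : Set (Fin n))ᶜ)).deleteEdges
        (↑E' : Set (Sym2 ↥((↑S : Set (Fin n))ᶜ)))) k := by
    have hkey : ∀ u v : ↥((↑S : Set (Fin n))ᶜ),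
        (((pathGraph n).induce ((↑S : Set (Fin n))ᶜ)).deleteEdges
          (↑E' : Set (Sym2 ↥((↑S : Set (Fin n))ᶜ)))).Reachable u v →
        (u : Fin n).val ≤ (v : Fin n).val →
        (((pathGraph n).induce ((↑S : Set (Fin n))ᶜ)).deleteEdges
          (↑E' : Set (Sym2 ↥((↑S : Set (Fin n))ᶜ)))).dist u v < k := by
      intro u v hr hle
      obtain ⟨hdist, hvert, hedge⟩ := aux_reach (hinjT _) (hstepT _ _) hr hle
      rw [hdist]
      by_contra hcon
      push_neg at hcon
      have hfvn : (v : Fin n).val < n := (v : Fin n).isLt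
      have hsv : (u : Fin n).val + k ≤ (v : Fin n).val := by omega
      rcases lt_or_ge ((u : Fin n).val + k) (p*(k+1)) with hcase | hcase
      · -- a deleted vertex inside the window, head region
        obtain ⟨j0, hj0⟩ : ∃ j0, (u : Fin n).val/(k+1) = j0 := ⟨_, rfl⟩
        obtain ⟨g0, hg0⟩ : ∃ g0, (u : Fin n).val % (k+1) = g0 := ⟨_, rfl⟩
        have hmd : g0 + (k+1) * j0 = (u : Fin n).val := by
          rw [← hj0, ← hg0]; exact Nat.mod_add_div _ _
        have hml : g0 < k+1 := by rw [← hg0]; exact Nat.mod_lt _ (by omega)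
        have hcomm : j0*(k+1) = (k+1) * j0 := Nat.mul_comm _ _
        have hjp : j0 < p := by
          by_contra hcp
          push_neg at hcp
          have h6 : p*(k+1) ≤ j0*(k+1) := Nat.mul_le_mul_right _ hcp
          omega
        obtain ⟨x, hx⟩ := hvert (j0*(k+1) + k) (by omega) (by omega)
        have hxS : (x : Fin n) ∈ S := (hSmem' _).mpr ⟨_, hjp, hx⟩
        exact x.2 (Finset.mem_coe.mpr hxS)
      · rcases lt_or_ge ((u : Fin n).val) (p*(k+1)) with hcase2 | hcase2
        · -- a deleted vertex inside the window, boundary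
          have hp1 : 0 < p := by
            rcases Nat.eq_zero_or_pos p with h0 | h0
            · rw [h0, zero_mul] at hcase2; omega
            · exact h0
          obtain ⟨p', hp'⟩ : ∃ p', p = p' + 1 := ⟨p - 1, by omega⟩
          have hpe : p * (k+1) = p'*(k+1) + (k+1) := by rw [hp']; ring
          obtain ⟨x, hx⟩ := hvert (p'*(k+1) + k) (by omega) (by omega)
          have hxS : (x : Fin n) ∈ S := (hSmem' _).mpr ⟨p', by omega, hx⟩
          exact x.2 (Finset.mem_coe.mpr hxS)
        · -- a deleted edge inside the window, tail region
          obtain ⟨r, hr'⟩ := Nat.exists_eq_add_of_le hcase2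
          obtain ⟨j0, hj0⟩ : ∃ j0, r/k = j0 := ⟨_, rfl⟩
          obtain ⟨g0, hg0⟩ : ∃ g0, r % k = g0 := ⟨_, rfl⟩
          have hmd : g0 + k * j0 = r := by rw [← hj0, ← hg0]; exact Nat.mod_add_div _ _
          have hml : g0 < k := by rw [← hg0]; exact Nat.mod_lt _ hk0
          have hje : (j0 + 1) * k = k * j0 + k := by ring
          have hjq : j0 + 1 ≤ q := by
            have h6 : (r+k)/k = j0 + 1 := by rw [← hj0]; exact Nat.add_div_right r hk0
            have h7 : (r+k)/k ≤ (m-1)/k := Nat.div_le_div_right (by omega)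
            rw [h6, hq0] at h7
            exact h7
          have hpos := hB1 (j0+1) (by omega)
          obtain ⟨a, b, hab, ha, hb⟩ :=
            hedge (p*(k+1) + (j0+1)*k - 1) (by omega) (by omega)
          have hbe : (b : Fin n).val = p*(k+1) + (j0+1)*k := by
            have hb' : (b : Fin n).val = p*(k+1) + (j0+1)*k - 1 + 1 := hb
            omega
          have hae : (a : Fin n).val = p*(k+1) + (j0+1)*k - 1 := ha
          have hmem := hmemE (j0+1) (by omega) hjq a b hae hbe
          rw [SimpleGraph.deleteEdges_adj] at hab
          exact hab.2 (Finset.mem_coe.mpr hmem)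
    intro u v hr
    rcases le_total ((u : Fin n).val) ((v : Fin n).val) with h | h
    · exact hkey u v hr h
    · rw [SimpleGraph.dist_comm]; exact hkey v u hr.symm h
  -- upper bound on CE for the chosen S
  have hub : CE ((pathGraph n).induce ((↑S : Set (Fin n))ᶜ)) k ≤ q := by
    unfold CE
    exact Nat.sInf_le ⟨E', hEsub, hE'card, hfail⟩
  -- lower bound on CE for an arbitrary T
  have hlow : ∀ T : Finset (Fin n), T.card = p →
      q ≤ CE ((pathGraph n).induce ((↑T : Set (Fin n))ᶜ)) k := by
    intro T hT
    unfold CE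
    apply le_csInf
    · -- set is nonempty: delete all edges
      refine ⟨(Finset.univ.filter
          (fun e => e ∈ ((pathGraph n).induce ((↑T : Set (Fin n))ᶜ)).edgeSet)).card,
        Finset.univ.filter _, ?_, rfl, ?_⟩
      · intro e he
        exact (Finset.mem_filter.mp (Finset.mem_coe.mp he)).2
      · intro u v hr
        obtain ⟨W⟩ := hr
        cases W with
        | nil => rw [SimpleGraph.dist_self]; omega
        | cons h W' =>
          exfalso
          rw [SimpleGraph.deleteEdges_adj] at h
          exact h.2 (Finset.mem_coe.mpr (Finset.mem_filter.mpr
            ⟨Finset.mem_univ _, (SimpleGraph.mem_edgeSet _).mpr h.1⟩))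
    · rintro x ⟨E'', hsub, hcard, hfailE⟩
      by_contra hcon
      push_neg at hcon
      set SV := T.image Fin.val with hSVdef
      set CEp := E''.image symMax with hCEpdef
      have hc1 : (SV.filter (fun t => (0:ℕ) ≤ t)).card ≤ p := by
        refine le_trans (Finset.card_filter_le _ _) ?_
        rw [hSVdef, ← hT]
        exact Finset.card_image_le
      have hc2 : (CEp.filter (fun c => (0:ℕ) < c)).card ≤ x := by
        refine le_trans (Finset.card_filter_le _ _) ?_
        rw [hCEpdef, ← hcard]
        exact Finset.card_image_le
      have harith : 0 + (k+1) * ((SV.filter (fun t => (0:ℕ) ≤ t)).card)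
          + k * ((CEp.filter (fun c => (0:ℕ) < c)).card) + (k+1) ≤ n := by
        have e1 : (k+1) * ((SV.filter (fun t => (0:ℕ) ≤ t)).card) ≤ (k+1)*p :=
          Nat.mul_le_mul_left _ hc1
        have e2 : k * ((CEp.filter (fun c => (0:ℕ) < c)).card) ≤ k*x :=
          Nat.mul_le_mul_left _ hc2
        have e3 : k * (x+1) ≤ k * q := Nat.mul_le_mul_left _ (by omega)
        have e4 : k * (x+1) = k*x + k := by ring
        have c1 : (k+1)*p = p*(k+1) := Nat.mul_comm _ _
        have c2 : k*q = q*k := Nat.mul_comm _ _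
        rcases hq1 with hc | hc
        · omega
        · have hq00 : q = 0 := by rw [← hq0, hc]; simp
          omega
      obtain ⟨s, hs0, hskn, hnoV, hnoE⟩ := aux_window n k SV CEp n 0 (by omega) harith
      have hvt : ∀ t, s ≤ t → t ≤ s + k →
          ∃ x : ↥((↑T : Set (Fin n))ᶜ), (x : Fin n).val = t := by
        intro t h1 h2
        refine ⟨⟨⟨t, by omega⟩, ?_⟩, rfl⟩
        simp only [Set.mem_compl_iff, Finset.mem_coe]
        intro hmem
        exact hnoV t h1 h2 (Finset.mem_image_of_mem Fin.val hmem)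
      have hedges : ∀ t, s ≤ t → t < s + k →
          ∃ a b : ↥((↑T : Set (Fin n))ᶜ),
            (((pathGraph n).induce ((↑T : Set (Fin n))ᶜ)).deleteEdges
              (↑E'' : Set (Sym2 ↥((↑T : Set (Fin n))ᶜ)))).Adj a b ∧
            (fun x : ↥((↑T : Set (Fin n))ᶜ) => (x : Fin n).val) a = t ∧
            (fun x : ↥((↑T : Set (Fin n))ᶜ) => (x : Fin n).val) b = t + 1 := by
        intro t h1 h2
        obtain ⟨a, ha⟩ := hvt t h1 (by omega)
        obtain ⟨b, hb⟩ := hvt (t+1) (by omega) (by omega)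
        refine ⟨a, b, ?_, ha, hb⟩
        rw [SimpleGraph.deleteEdges_adj]
        constructor
        · show (pathGraph n).Adj _ _
          rw [pathGraph_adj]
          left
          show (a : Fin n).val + 1 = (b : Fin n).val
          omega
        · intro hmem
          have hmm : symMax s(a,b) ∈ CEp :=
            Finset.mem_image_of_mem symMax (Finset.mem_coe.mp hmem)
          rw [symMax_mk] at hmm
          have hmax : max (a : Fin n).val (b : Fin n).val = t + 1 := by omega
          rw [hmax] at hmm
          exact hnoE (t+1) (by omega) (by omega) hmm
      obtain ⟨x0, hx0⟩ := hvt s le_rfl (by omega)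
      obtain ⟨y, hy, hry⟩ := aux_build (hinjT _) k x0 hx0 hedges
      have hy' : (y : Fin n).val = s + k := hy
      obtain ⟨hdist, -, -⟩ := aux_reach (hinjT _) (hstepT _ _) hry
        (by show (x0 : Fin n).val ≤ (y : Fin n).val; omega)
      have hD : (((pathGraph n).induce ((↑T : Set (Fin n))ᶜ)).deleteEdges
          (↑E'' : Set (Sym2 ↥((↑T : Set (Fin n))ᶜ)))).dist x0 y
          = (y : Fin n).val - (x0 : Fin n).val := hdist
      have hF := hfailE x0 y hry
      omega
  -- CM bounds
  have hCMle : CM (pathGraph n) k p ≤ CE ((pathGraph n).induce ((↑S : Set (Fin n))ᶜ)) k := by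
    unfold CM
    exact Nat.sInf_le ⟨S, hScard, rfl⟩
  have hCMge : q ≤ CM (pathGraph n) k p := by
    unfold CM
    refine le_csInf ⟨_, S, hScard, rfl⟩ ?_
    rintro x ⟨T, hT, rfl⟩
    exact hlow T hT
  constructor
  · intro hpe
    obtain ⟨D, hD⟩ : ∃ D, n/(k+1) = D := ⟨_, rfl⟩
    obtain ⟨Mo, hMo⟩ : ∃ Mo, n % (k+1) = Mo := ⟨_, rfl⟩
    have hmod : (k+1) * D + Mo = n := by rw [← hD, ← hMo]; exact Nat.div_add_mod n (k+1)
    have hml : Mo < k+1 := by rw [← hMo]; exact Nat.mod_lt _ (by omega)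
    have h2 : p * (k+1) = (k+1) * D := by rw [hpe, hD]; ring
    have hmk : m < k + 1 := by omega
    have hq00 : q = 0 := by rw [← hq0]; exact Nat.div_eq_of_lt (by omega)
    have hle0 := le_trans hCMle hub
    omega
  · intro hpl
    have hfq : (n - p * (k + 1) - 1) / k = q := by rw [hnm, hq0]
    rw [hfq]
    exact le_antisymm (le_trans hCMle hub) hCMge
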